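/- Let ω, ω̃, h, h̃ ∈ ℝ and n ≠ 0, and let M be the 4×4 real matrix M = (1/(8n)) · [[0, −ω²h, 0, 2ωω̃h], [ω²h, 0, 2ωω̃h, 0], [0, 2ωω̃h̃, 0, −ω̃²h̃], [2ωω̃h̃, 0, ω̃²h̃, 0]]. Then the characteristic polynomial of M is C(λ) = λ⁴ + λ² (ω⁴h² + ω̃⁴h̃² − 8ω²ω̃²hh̃)/(8n)² + 9 ω⁴ω̃⁴h²h̃²/(8n)⁴. In particular C(λ) = C(−λ). -/

import Mathlib

set_option maxHeartbeats 2000000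

/-!
STATEMENT 12: The characteristic polynomial of the linearisation matrix
`M = (1/(8n))·[[0, −ω²h, 0, 2ωω̃h], [ω²h, 0, 2ωω̃h, 0], [0, 2ωω̃h̃, 0, −ω̃²h̃],
[2ωω̃h̃, 0, ω̃²h̃, 0]]` is
`C(λ) = λ⁴ + λ²(ω⁴h² + ω̃⁴h̃² − 8ω²ω̃²hh̃)/(8n)² + 9ω⁴ω̃⁴h²h̃²/(8n)⁴`;
in particular `C(λ) = C(−λ)`.
-/

open Polynomial

theorem linearisation_charpoly
    (ω ωt h ht nn : ℝ) (hn : nn ≠ 0)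
    (M : Matrix (Fin 4) (Fin 4) ℝ)
    (hM : M = (1/(8*nn)) •
      !![0,        -ω^2*h,     0,          2*ω*ωt*h;
         ω^2*h,    0,          2*ω*ωt*h,   0;
         0,        2*ω*ωt*ht,  0,          -ωt^2*ht;
         2*ω*ωt*ht, 0,         ωt^2*ht,    0]) :
    M.charpoly = X^4
      + C ((ω^4*h^2 + ωt^4*ht^2 - 8*ω^2*ωt^2*h*ht)/(8*nn)^2) * X^2
      + C (9*ω^4*ωt^4*h^2*ht^2/(8*nn)^4)
    ∧ ∀ x : ℝ, M.charpoly.eval x = M.charpoly.eval (-x) := by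
  have hmain : M.charpoly = X^4
      + C ((ω^4*h^2 + ωt^4*ht^2 - 8*ω^2*ωt^2*h*ht)/(8*nn)^2) * X^2
      + C (9*ω^4*ωt^4*h^2*ht^2/(8*nn)^4) := by
    set k : ℝ := 1/(8*nn) with hk
    have hc : Matrix.charmatrix M =
      !![X, C (k*(ω^2*h)), 0, -C (k*(2*ω*ωt*h));
         -C (k*(ω^2*h)), X, -C (k*(2*ω*ωt*h)), 0;
         0, -C (k*(2*ω*ωt*ht)), X, C (k*(ωt^2*ht));
         -C (k*(2*ω*ωt*ht)), 0, -C (k*(ωt^2*ht)), X] := by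
      subst hM
      ext i j
      fin_cases i <;> fin_cases j <;>
        simp [Matrix.charmatrix_apply, Matrix.diagonal, Matrix.smul_apply, smul_eq_mul] <;>
        ring_nf
    rw [Matrix.charpoly, hc]
    rw [Matrix.det_succ_row_zero]
    simp [Fin.sum_univ_succ, Matrix.det_succ_row_zero, Fin.succAbove, Matrix.submatrix,
      Matrix.det_fin_one, Fin.castSucc, Fin.castAdd, Fin.castLE]
    have hk2 : ((ω^4*h^2 + ωt^4*ht^2 - 8*ω^2*ωt^2*h*ht)/(8*nn)^2)
        = k^2*(ω^4*h^2) + k^2*(ωt^4*ht^2) - k^2*(8*ω^2*ωt^2*h*ht) := by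
      rw [hk]; field_simp
    have hk4 : (9*ω^4*ωt^4*h^2*ht^2/(8*nn)^4) = k^4*(9*ω^4*ωt^4*h^2*ht^2) := by
      rw [hk]; field_simp
    rw [hk2, hk4]
    simp only [map_add, map_sub, _root_.map_mul, map_pow, map_ofNat, Polynomial.C_mul,
      Polynomial.C_add, Polynomial.C_sub]
    ring
  refine ⟨hmain, fun x => ?_⟩
  rw [hmain]
  simp [eval_add, eval_mul, eval_pow]
  ring
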